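/- Let H be a d-uniform properly-connected hypergraph, E an edge with N(E) = {z_1,...,z_t}, and H' = {K edge of H : dist_H(E, K) ≥ d+1}. Then (x^E) ∩ I(H\E) = x^E · ((z_1,...,z_t) + I(H')), where I denotes the edge ideal. -/

import Mathlib

open Finset
open scoped Classical

noncomputable section

/-- A simple hypergraph: all edges have at least two vertices and no edge contains another. -/
structure SimpleHypergraph (V : Type*) where
  edges : Finset (Finset V)
  card_ge : ∀ e ∈ edges, 2 ≤ e.card
  antichain : ∀ e ∈ edges, ∀ f ∈ edges, e ⊆ f → e = f

variable {V : Type*} [DecidableEq V]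

/-- A chain `(E₀, x₁, E₁, …, xₙ, Eₙ)` in a hypergraph, recorded as the list of its edges;
the vertex conditions amount to `xₖ ∈ Eₖ₋₁ ∩ Eₖ`. -/
def IsHChain (H : SimpleHypergraph V) (l : List (Finset V)) : Prop :=
  l ≠ [] ∧ l.Nodup ∧ (∀ e ∈ l, e ∈ H.edges) ∧
  ∃ xs : List V, xs.Nodup ∧ xs.length + 1 = l.length ∧
    ∀ i, (h : i < xs.length) → xs.get ⟨i, h⟩ ∈ l.getD i ∅ ∩ l.getD (i+1) ∅

/-- A proper chain: `|Eᵢ ∩ Eᵢ₊₁| = |Eᵢ₊₁| - 1` for all `i`. -/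
def IsProperChain (H : SimpleHypergraph V) (l : List (Finset V)) : Prop :=
  IsHChain H l ∧ ∀ i, i + 1 < l.length →
    (l.getD i ∅ ∩ l.getD (i+1) ∅).card + 1 = (l.getD (i+1) ∅).card

/-- A proper irredundant chain: no proper subsequence with the same endpoints is a proper
chain. -/
def IsPIChain (H : SimpleHypergraph V) (l : List (Finset V)) : Prop :=
  IsProperChain H l ∧ ∀ l' : List (Finset V), l'.Sublist l → l' ≠ l →
    l'.head? = l.head? → l'.getLast? = l.getLast? → ¬ IsProperChain H l'

/-- The distance between two edges: minimal length of a proper irredundant chain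
from `E` to `F` (`∞` if there is none). -/
def edgeDist (H : SimpleHypergraph V) (E F : Finset V) : ℕ∞ :=
  sInf ((fun l : List (Finset V) => ((l.length - 1 : ℕ) : ℕ∞)) ''
    {l | IsPIChain H l ∧ l.head? = some E ∧ l.getLast? = some F})

/-- A `d`-uniform properly-connected hypergraph. -/
def UniformPC (H : SimpleHypergraph V) (d : ℕ) : Prop :=
  (∀ e ∈ H.edges, e.card = d) ∧
  ∀ E ∈ H.edges, ∀ F ∈ H.edges, (E ∩ F).Nonempty →
    edgeDist H E F = ((d - (E ∩ F).card : ℕ) : ℕ∞)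

/-- The sub-hypergraph consisting of the edges satisfying `P`. -/
def SimpleHypergraph.restrict (H : SimpleHypergraph V) (P : Finset V → Prop) :
    SimpleHypergraph V where
  edges := H.edges.filter P
  card_ge := fun e he => H.card_ge e (Finset.mem_filter.mp he).1
  antichain := fun e he f hf hef =>
    H.antichain e (Finset.mem_filter.mp he).1 f (Finset.mem_filter.mp hf).1 hef

/-- The vertex neighbor set `N(E)` of an edge: union of `F \ E` over edges at distance 1. -/
def nbrSet (H : SimpleHypergraph V) (E : Finset V) : Finset V :=
  (H.edges.filter fun F => edgeDist H E F = 1).sup fun F => F \ E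

variable (k : Type*) [Field k]

/-- The squarefree monomial attached to an edge. -/
def edgeMonomial (E : Finset V) : MvPolynomial V k := ∏ x ∈ E, MvPolynomial.X x

/-- The edge ideal of a hypergraph. -/
def edgeIdeal (H : SimpleHypergraph V) : Ideal (MvPolynomial V k) :=
  Ideal.span ((fun E => edgeMonomial k E) '' ↑H.edges)

/-- The exponent vector of the squarefree monomial attached to an edge. -/
def mexp (E : Finset V) : V →₀ ℕ := ∑ x ∈ E, Finsupp.single x 1

/-- The minimal monomials (w.r.t. divisibility) among a finite set of monomials;
these are the minimal generators of the monomial ideal they generate. -/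
def minMon (A : Finset (V →₀ ℕ)) : Finset (V →₀ ℕ) :=
  A.filter fun m => ∀ m' ∈ A, m' ≤ m → m' = m

/-- Minimal generators of `J ∩ K`, where `J`, `K` are the monomial ideals with
(minimal) monomial generators `A`, `B`: minimal elements among the pairwise lcm's. -/
def interMin (A B : Finset (V →₀ ℕ)) : Finset (V →₀ ℕ) :=
  minMon ((A ×ˢ B).image fun p => p.1 ⊔ p.2)

/-- Eliahou–Kervaire splitting: the monomial ideal generated by `A ∪ B` is split as
the sum of the ideals generated by `A` and by `B`. -/
def IsSplitting (A B : Finset (V →₀ ℕ)) : Prop :=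
  A.Nonempty ∧ B.Nonempty ∧ Disjoint A B ∧
  (∀ m ∈ A ∪ B, ∀ m' ∈ A ∪ B, m' ≤ m → m' = m) ∧
  ∃ φ ψ : (V →₀ ℕ) → (V →₀ ℕ),
    (∀ w ∈ interMin A B, φ w ∈ A ∧ ψ w ∈ B ∧ w = φ w ⊔ ψ w) ∧
    ∀ S ⊆ interMin A B, S.Nonempty → S.sup φ < S.sup id ∧ S.sup ψ < S.sup id

/-- A splitting edge of a hypergraph: `I(H) = (x^E) + I(H \ E)` is a splitting. -/
def IsSplittingEdge (H : SimpleHypergraph V) (E : Finset V) : Prop :=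
  E ∈ H.edges ∧ IsSplitting {mexp E} ((H.edges.erase E).image mexp)

variable [LinearOrder V]

/-- Total degree of a monomial. -/
def mdeg (m : V →₀ ℕ) : ℕ := m.sum fun _ e => e

/-- Basis of the degree-`j` part of the `i`-th term of the Taylor complex of the monomial
ideal generated by `G`: `i`-element subsets of `G` whose lcm has degree `j`. -/
def TaylorIndex (G : Finset (V →₀ ℕ)) (i j : ℕ) : Finset (Finset (V →₀ ℕ)) :=
  G.powerset.filter fun S => S.card = i ∧ mdeg (S.sup id) = j

/-- Matrix of the Taylor-complex differential `T_{i+1} → T_i` reduced mod the maximal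
ideal, in homological degree-`j` graded part. -/
def taylorMatrix (G : Finset (V →₀ ℕ)) (i j : ℕ) :
    Matrix (TaylorIndex G i j) (TaylorIndex G (i+1) j) k :=
  fun S' S =>
    if (S' : Finset (V →₀ ℕ)) ⊆ (S : Finset (V →₀ ℕ)) ∧
        (S' : Finset (V →₀ ℕ)).sup id = (S : Finset (V →₀ ℕ)).sup id then
      ∑ m ∈ (S : Finset (V →₀ ℕ)) \ (S' : Finset (V →₀ ℕ)),
        (-1 : k) ^ ((S' : Finset (V →₀ ℕ)).filter fun a => toLex a < toLex m).card
    else 0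

/-- The Taylor-complex differential reduced mod the maximal ideal. -/
def taylorBoundary (G : Finset (V →₀ ℕ)) (i j : ℕ) :
    ((TaylorIndex G (i+1) j) → k) →ₗ[k] ((TaylorIndex G i j) → k) :=
  Matrix.mulVecLin (taylorMatrix k G i j)

/-- The graded Betti number `β_{i,j}` of the monomial ideal generated by `G`, computed as
the dimension of the degree-`j` part of the `i`-th homology of the Taylor complex tensored
with the residue field. -/
def monomialBetti (G : Finset (V →₀ ℕ)) (i j : ℕ) : ℕ :=
  Module.finrank k (LinearMap.ker (taylorBoundary k G i j)) -
  Module.finrank k (LinearMap.range (taylorBoundary k G (i+1) j))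

/-- Castelnuovo–Mumford regularity of the monomial ideal generated by `G`. -/
def monReg (G : Finset (V →₀ ℕ)) : ℕ :=
  sSup {r | ∃ i j, monomialBetti k G i j ≠ 0 ∧ r + i = j}

/-- Projective dimension of the monomial ideal generated by `G`. -/
def monPdim (G : Finset (V →₀ ℕ)) : ℕ :=
  sSup {i | ∃ j, monomialBetti k G i j ≠ 0}

/-- Graded Betti numbers of the edge ideal of a hypergraph. -/
def edgeBetti (H : SimpleHypergraph V) (i j : ℕ) : ℕ :=
  monomialBetti k (H.edges.image mexp) i j

/-- Regularity of the edge ideal of a hypergraph. -/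
def edgeReg (H : SimpleHypergraph V) : ℕ :=
  monReg k (H.edges.image mexp)

/-! ### Auxiliary lemmas -/

section AuxLemmas

variable {V' : Type*} [DecidableEq V']

lemma mexp_apply (E : Finset V') (x : V') : mexp E x = if x ∈ E then 1 else 0 := by
  classical
  rw [mexp, Finsupp.finset_sum_apply]
  simp [Finsupp.single_apply, Finset.sum_ite_eq]

lemma mexp_le_iff (F : Finset V') (g : V' →₀ ℕ) : mexp F ≤ g ↔ ∀ x ∈ F, 1 ≤ g x := by
  rw [Finsupp.le_def]
  constructor
  · intro h x hx
    have := h x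
    rwa [mexp_apply, if_pos hx] at this
  · intro h x
    rw [mexp_apply]
    split_ifs with hx
    · exact h x hx
    · exact Nat.zero_le _

lemma edgeMonomial_eq (k' : Type*) [Field k'] (E : Finset V') :
    edgeMonomial k' E = MvPolynomial.monomial (mexp E) 1 := by
  classical
  rw [edgeMonomial, mexp]
  induction E using Finset.induction with
  | empty => simp
  | @insert a s ha ih =>
      rw [Finset.prod_insert ha, Finset.sum_insert ha, ih]
      rw [show (MvPolynomial.X a : MvPolynomial V' k') =
        MvPolynomial.monomial (Finsupp.single a 1) 1 from rfl, MvPolynomial.monomial_mul, one_mul]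

lemma X_eq_monomial (k' : Type*) [Field k'] (z : V') :
    (MvPolynomial.X z : MvPolynomial V' k') = MvPolynomial.monomial (Finsupp.single z 1) 1 := rfl

/-- The "divisibility ideal": polynomials all of whose monomials are divisible by some
member of `S`. -/
def divIdeal (k' : Type*) [Field k'] (S : Set (V' →₀ ℕ)) : Ideal (MvPolynomial V' k') where
  carrier := {p | ∀ a ∈ p.support, ∃ m ∈ S, m ≤ a}
  add_mem' := by
    intro p q hp hq a ha
    rcases Finset.mem_union.mp (MvPolynomial.support_add ha) with h | h
    · exact hp a h
    · exact hq a h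
  zero_mem' := by intro a ha; simp at ha
  smul_mem' := by
    intro c p hp a ha
    rw [smul_eq_mul] at ha
    have hne : MvPolynomial.coeff a (c * p) ≠ 0 := MvPolynomial.mem_support_iff.mp ha
    rw [MvPolynomial.coeff_mul] at hne
    obtain ⟨⟨u, v⟩, huv, hprod⟩ := Finset.exists_ne_zero_of_sum_ne_zero hne
    have hv : v ∈ p.support := MvPolynomial.mem_support_iff.mpr (right_ne_zero_of_mul hprod)
    obtain ⟨m, hm, hle⟩ := hp v hv
    have hva : v ≤ a := by
      have : u + v = a := Finset.HasAntidiagonal.mem_antidiagonal.mp huv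
      exact this ▸ le_add_self
    exact ⟨m, hm, hle.trans hva⟩

lemma mem_divIdeal_iff (k' : Type*) [Field k'] (S : Set (V' →₀ ℕ)) (p : MvPolynomial V' k') :
    p ∈ divIdeal k' S ↔ ∀ a ∈ p.support, ∃ m ∈ S, m ≤ a := Iff.rfl

lemma edgeIdeal_le_divIdeal (k' : Type*) [Field k'] (H₀ : SimpleHypergraph V') :
    edgeIdeal k' H₀ ≤ divIdeal k' (mexp '' ↑H₀.edges) := by
  rw [edgeIdeal, Ideal.span_le]
  rintro _ ⟨F, hF, rfl⟩ a ha
  simp only [edgeMonomial_eq, MvPolynomial.support_monomial, if_neg (one_ne_zero),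
    Finset.mem_singleton] at ha
  exact ⟨mexp F, ⟨F, hF, rfl⟩, ha ▸ le_rfl⟩

lemma monomial_mem_of_le {k' : Type*} [Field k'] {I : Ideal (MvPolynomial V' k')}
    {f a : V' →₀ ℕ} (h : f ≤ a) (hf : MvPolynomial.monomial f (1 : k') ∈ I) (c : k') :
    MvPolynomial.monomial a c ∈ I := by
  have heq : MvPolynomial.monomial a c
      = MvPolynomial.monomial (a - f) c * MvPolynomial.monomial f (1 : k') := by
    rw [MvPolynomial.monomial_mul, mul_one, tsub_add_cancel_of_le h]
  rw [heq]
  exact Ideal.mul_mem_left _ _ hf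

lemma edgeMonomial_mem (k' : Type*) [Field k'] (H₀ : SimpleHypergraph V') {F : Finset V'}
    (hF : F ∈ H₀.edges) : edgeMonomial k' F ∈ edgeIdeal k' H₀ :=
  Ideal.subset_span (Set.mem_image_of_mem _ (Finset.mem_coe.mpr hF))

lemma mem_restrict_iff (H : SimpleHypergraph V') (P : Finset V' → Prop) (F : Finset V') :
    F ∈ (H.restrict P).edges ↔ F ∈ H.edges ∧ P F := by
  unfold SimpleHypergraph.restrict
  exact Finset.mem_filter

/-! ### Chain lemmas -/

lemma isPIChain_singleton {H : SimpleHypergraph V'} {A : Finset V'} (hA : A ∈ H.edges) :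
    IsPIChain H [A] := by
  refine ⟨⟨⟨by simp, by simp, by simp [hA], [], by simp, by simp, ?_⟩, ?_⟩, ?_⟩
  · intro i h; simp at h
  · intro i h; simp at h
  · intro l' hsub hne hhead hlast hpc'
    have h1 : l' ≠ [] := hpc'.1.1
    have h2 : l'.length ≤ 1 := by simpa using hsub.length_le
    have h3 : 1 ≤ l'.length := List.length_pos_iff.mpr h1
    have h4 : l'.length = [A].length := by simp; omega
    exact hne (hsub.eq_of_length h4)

lemma isPIChain_pair {H : SimpleHypergraph V'} {A B : Finset V'} (hA : A ∈ H.edges)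
    (hB : B ∈ H.edges) (hne : A ≠ B) {x : V'} (hx : x ∈ A ∩ B)
    (hcard : (A ∩ B).card + 1 = B.card) : IsPIChain H [A, B] := by
  refine ⟨⟨⟨by simp, by simp [hne], by simp [hA, hB], [x], by simp, by simp, ?_⟩, ?_⟩, ?_⟩
  · intro i h
    simp at h
    have : i = 0 := by omega
    subst this
    simpa using hx
  · intro i h
    simp at h
    have : i = 0 := by omega
    subst this
    simpa using hcard
  · intro l' hsub hne' hhead hlast hpc'
    have h1 : l' ≠ [] := hpc'.1.1
    obtain ⟨c, t, rfl⟩ := List.exists_cons_of_ne_nil h1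
    have hcA : c = A := by
      rw [List.head?_cons, List.head?_cons, Option.some_inj] at hhead
      exact hhead
    cases t with
    | nil =>
        have hcB : c = B := by simpa using hlast
        exact hne (hcA.symm.trans hcB)
    | cons e t' =>
        have h2 : (c :: e :: t').length ≤ 2 := hsub.length_le
        simp only [List.length_cons] at h2
        have ht' : t' = [] := by
          cases t' with
          | nil => rfl
          | cons _ _ => simp at h2
        subst ht'
        exact hne' (hsub.eq_of_length rfl)

lemma enat_sInf_mem {S : Set ℕ∞} (h : S.Nonempty) : sInf S ∈ S := by
  have h1 : wellFounded_lt.min S h ∈ S := WellFounded.min_mem _ S h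
  have h2 : ∀ y ∈ S, wellFounded_lt.min S h ≤ y :=
    fun y hy => not_lt.mp (WellFounded.not_lt_min wellFounded_lt S hy)
  have : sInf S = wellFounded_lt.min S h := le_antisymm (sInf_le h1) (le_sInf h2)
  rw [this]; exact h1

lemma exists_chain_of_edgeDist_ne_top {H : SimpleHypergraph V'} {E F : Finset V'}
    (h : edgeDist H E F ≠ ⊤) :
    ∃ l : List (Finset V'), IsPIChain H l ∧ l.head? = some E ∧ l.getLast? = some F ∧
      ((l.length - 1 : ℕ) : ℕ∞) = edgeDist H E F := by
  set S := ((fun l : List (Finset V') => ((l.length - 1 : ℕ) : ℕ∞)) ''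
    {l | IsPIChain H l ∧ l.head? = some E ∧ l.getLast? = some F}) with hS
  have hne : S.Nonempty := by
    by_contra hc
    rw [Set.not_nonempty_iff_eq_empty] at hc
    apply h
    rw [edgeDist, ← hS, hc, sInf_empty]
  have := enat_sInf_mem hne
  rw [hS] at this
  obtain ⟨l, ⟨hl1, hl2, hl3⟩, hval⟩ := this
  exact ⟨l, hl1, hl2, hl3, hval⟩

lemma eq_of_edgeDist_eq_zero {H : SimpleHypergraph V'} {E F : Finset V'}
    (h : edgeDist H E F = 0) : E = F := by
  obtain ⟨l, hPI, hhead, hlast, hval⟩ :=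
    exists_chain_of_edgeDist_ne_top (E := E) (F := F) (H := H) (by rw [h]; simp)
  rw [h, Nat.cast_eq_zero] at hval
  have hne : l ≠ [] := hPI.1.1.1
  have hlen : l.length = 1 := by
    have := List.length_pos_iff.mpr hne
    omega
  obtain ⟨c, rfl⟩ := List.length_eq_one_iff.mp hlen
  rw [List.head?_cons, Option.some_inj] at hhead
  rw [List.getLast?_singleton, Option.some_inj] at hlast
  rw [← hhead, ← hlast]

lemma edgeDist_self_eq_zero {H : SimpleHypergraph V'} {E : Finset V'} (hE : E ∈ H.edges) :
    edgeDist H E E = 0 := by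
  have hle : edgeDist H E E ≤ 0 := by
    have : (0 : ℕ∞) ∈ ((fun l : List (Finset V') => ((l.length - 1 : ℕ) : ℕ∞)) ''
        {l | IsPIChain H l ∧ l.head? = some E ∧ l.getLast? = some E}) :=
      ⟨[E], ⟨isPIChain_singleton hE, rfl, rfl⟩, by norm_num⟩
    exact sInf_le this
  exact le_antisymm hle bot_le

lemma IsProperChain.tail {H : SimpleHypergraph V'} {a : Finset V'} {l : List (Finset V')}
    (h : IsProperChain H (a :: l)) (hl : l ≠ []) : IsProperChain H l := by
  obtain ⟨⟨hne, hnd, hedges, xs, hxsnd, hxslen, hxs⟩, hprop⟩ := h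
  have hlen0 : 0 < xs.length := by
    simp only [List.length_cons] at hxslen
    have := List.length_pos_iff.mpr hl
    omega
  refine ⟨⟨hl, (List.nodup_cons.mp hnd).2,
    fun e he => hedges e (List.mem_cons_of_mem _ he), xs.tail, hxsnd.tail, ?_, ?_⟩, ?_⟩
  · rw [List.length_tail]
    simp only [List.length_cons] at hxslen
    omega
  · intro i hi
    rw [List.length_tail] at hi
    have hi' : i + 1 < xs.length := by omega
    have hmem := hxs (i + 1) hi'
    have hget : xs.tail.get ⟨i, by rw [List.length_tail]; omega⟩ = xs.get ⟨i + 1, hi'⟩ := by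
      simp [List.get_eq_getElem, List.getElem_tail]
    rw [hget]
    simpa [List.getD_cons_succ] using hmem
  · intro i hi
    have := hprop (i + 1) (by simp only [List.length_cons]; omega)
    simpa [List.getD_cons_succ] using this

lemma card_sdiff_le_of_properChain {H : SimpleHypergraph V'} {d : ℕ}
    (hcard : ∀ e ∈ H.edges, e.card = d) :
    ∀ l : List (Finset V'), IsProperChain H l → ∀ A B, l.head? = some A →
      l.getLast? = some B → (A \ B).card ≤ l.length - 1 := by
  intro l
  induction l with
  | nil => intro h; exact absurd rfl h.1.1
  | cons a t ih =>
      intro h A B hA hB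
      rw [List.head?_cons, Option.some_inj] at hA
      subst hA
      cases t with
      | nil =>
          rw [List.getLast?_singleton, Option.some_inj] at hB
          subst hB
          simp
      | cons b t' =>
          have htail : IsProperChain H (b :: t') := h.tail (by simp)
          have hB' : (b :: t').getLast? = some B := by
            rwa [List.getLast?_cons_cons] at hB
          have ih' := ih htail b B rfl hB'
          have hprop := h.2 0 (by simp)
          simp only [List.getD_cons_zero, List.getD_cons_succ] at hprop
          have hamem : a ∈ H.edges := h.1.2.2.1 a (by simp)
          have hbmem : b ∈ H.edges := h.1.2.2.1 b (by simp)
          have ha : a.card = d := hcard a hamem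
          have hb : b.card = d := hcard b hbmem
          have hab : (a \ b).card = 1 := by
            have := Finset.card_sdiff_add_card_inter a b
            omega
          have hsub : a \ B ⊆ (a \ b) ∪ (b \ B) := by
            intro x hx
            rw [Finset.mem_sdiff] at hx
            by_cases hxb : x ∈ b
            · exact Finset.mem_union_right _ (Finset.mem_sdiff.mpr ⟨hxb, hx.2⟩)
            · exact Finset.mem_union_left _ (Finset.mem_sdiff.mpr ⟨hx.1, hxb⟩)
          have := (Finset.card_le_card hsub).trans (Finset.card_union_le _ _)
          simp only [List.length_cons] at ih' ⊢
          omega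

/-- The key combinatorial lemma: an edge `F ≠ E` at distance at most `d` from `E`
contains a vertex of `N(E)` outside `E`. -/
lemma exists_nbr_of_close {H : SimpleHypergraph V'} {d : ℕ} (hpc : UniformPC H d)
    {E F : Finset V'} (hE : E ∈ H.edges) (hF : F ∈ H.edges) (hne : F ≠ E)
    (hd : ¬ ((d : ℕ∞) + 1 ≤ edgeDist H E F)) :
    ∃ z, z ∈ F ∧ z ∉ E ∧ z ∈ nbrSet H E := by
  have hle : edgeDist H E F ≤ (d : ℕ∞) := by
    rw [ENat.add_one_le_iff (by simp)] at hd
    exact not_lt.mp hd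
  obtain ⟨l, hPI, hhead, hlast, hval⟩ :=
    exists_chain_of_edgeDist_ne_top (E := E) (F := F) (H := H)
      (by intro h; rw [h, top_le_iff] at hle; exact (ENat.coe_ne_top d) hle)
  obtain ⟨E₀, l₁, rfl⟩ := List.exists_cons_of_ne_nil hPI.1.1.1
  rw [List.head?_cons, Option.some_inj] at hhead
  symm at hhead
  subst hhead
  cases l₁ with
  | nil =>
      rw [List.getLast?_singleton, Option.some_inj] at hlast
      exact absurd hlast.symm hne
  | cons E₁ rest =>
  have hE₁ : E₁ ∈ H.edges := hPI.1.1.2.2.1 E₁ (by simp)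
  have hnodup := hPI.1.1.2.1
  have hneE₁ : E ≠ E₁ := by
    rw [List.nodup_cons] at hnodup
    exact fun h => hnodup.1 (h ▸ List.mem_cons_self)
  obtain ⟨xs, hxnd, hxlen, hxmem⟩ := hPI.1.1.2.2.2
  have hx0 : 0 < xs.length := by
    simp only [List.length_cons] at hxlen
    omega
  have hx1 := hxmem 0 hx0
  simp only [List.getD_cons_zero, List.getD_cons_succ] at hx1
  have hprop0 := hPI.1.2 0 (by simp)
  simp only [List.getD_cons_zero, List.getD_cons_succ] at hprop0
  have hcE : E.card = d := hpc.1 E hE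
  have hcE₁ : E₁.card = d := hpc.1 E₁ hE₁
  have hd1 : edgeDist H E E₁ ≤ 1 := by
    refine sInf_le ⟨[E, E₁], ⟨isPIChain_pair hE hE₁ hneE₁ hx1 hprop0, rfl, ?_⟩, by norm_num⟩
    simp
  have hne0 : edgeDist H E E₁ ≠ 0 := fun h => hneE₁ (eq_of_edgeDist_eq_zero h)
  have hdist1 : edgeDist H E E₁ = 1 := le_antisymm hd1 (ENat.one_le_iff_ne_zero.mpr hne0)
  have hcard1 : (E₁ \ E).card = 1 := by
    have h1 := Finset.card_sdiff_add_card_inter E₁ E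
    have h2 : (E₁ ∩ E).card = (E ∩ E₁).card := by rw [Finset.inter_comm]
    omega
  obtain ⟨z, hz⟩ := Finset.card_eq_one.mp hcard1
  have hzmem : z ∈ E₁ ∧ z ∉ E := by
    have : z ∈ E₁ \ E := hz ▸ Finset.mem_singleton_self z
    exact Finset.mem_sdiff.mp this
  have hzN : z ∈ nbrSet H E := by
    rw [nbrSet, Finset.mem_sup]
    exact ⟨E₁, Finset.mem_filter.mpr ⟨hE₁, hdist1⟩, hz ▸ Finset.mem_singleton_self z⟩
  by_cases hzF : z ∈ F
  · exact ⟨z, hzF, hzmem.2, hzN⟩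
  · exfalso
    have hdist_t : edgeDist H E F = ((rest.length + 1 : ℕ) : ℕ∞) := by
      rw [← hval]
      norm_num
    have htail : IsProperChain H (E₁ :: rest) := hPI.1.tail (by simp)
    have hlast' : (E₁ :: rest).getLast? = some F := by
      rwa [List.getLast?_cons_cons] at hlast
    have hDcard := card_sdiff_le_of_properChain hpc.1 (E₁ :: rest) htail E₁ F rfl hlast'
    simp only [List.length_cons] at hDcard
    have hIcard : d ≤ (E₁ ∩ F).card + rest.length := by
      have := Finset.card_sdiff_add_card_inter E₁ F
      omega
    have hsub : E₁ ∩ F ⊆ E ∩ F := by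
      intro x hx
      rw [Finset.mem_inter] at hx ⊢
      refine ⟨?_, hx.2⟩
      by_contra hxE
      have : x ∈ E₁ \ E := Finset.mem_sdiff.mpr ⟨hx.1, hxE⟩
      rw [hz, Finset.mem_singleton] at this
      exact hzF (this ▸ hx.2)
    have hEFcard : d ≤ (E ∩ F).card + rest.length :=
      le_trans hIcard (Nat.add_le_add_right (Finset.card_le_card hsub) _)
    have htd : rest.length + 1 ≤ d := by
      rw [hdist_t, Nat.cast_le] at hle
      exact hle
    have hEFne : (E ∩ F).Nonempty := Finset.card_pos.mp (by omega)
    have hpcEF := hpc.2 E hE F hF hEFne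
    rw [hdist_t, Nat.cast_inj] at hpcEF
    omega

lemma nbr_divides {H : SimpleHypergraph V'} {d : ℕ} (hpc : UniformPC H d)
    {E : Finset V'} (hE : E ∈ H.edges) {z : V'} (hz : z ∈ nbrSet H E) :
    ∃ F ∈ H.edges, F ≠ E ∧ mexp F ≤ mexp E + Finsupp.single z 1 := by
  rw [nbrSet, Finset.mem_sup] at hz
  obtain ⟨F, hF, hzF⟩ := hz
  rw [Finset.mem_filter] at hF
  rw [Finset.mem_sdiff] at hzF
  obtain ⟨l, hPI, hhead, hlast, hval⟩ :=
    exists_chain_of_edgeDist_ne_top (E := E) (F := F) (H := H)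
      (by rw [hF.2]; simp)
  rw [hF.2] at hval
  have hlen : l.length = 2 := by
    have hne : l ≠ [] := hPI.1.1.1
    have h1 := List.length_pos_iff.mpr hne
    have : (l.length - 1 : ℕ) = 1 := by exact_mod_cast hval
    omega
  obtain ⟨A, B, rfl⟩ := List.length_eq_two.mp hlen
  rw [List.head?_cons, Option.some_inj] at hhead
  symm at hhead
  subst hhead
  have hBF : F = B := by
    symm; simpa [List.getLast?_cons_cons] using hlast
  subst hBF
  have hprop0 := hPI.1.2 0 (by simp)
  simp only [List.getD_cons_zero, List.getD_cons_succ] at hprop0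
  have hcE : E.card = d := hpc.1 E hE
  have hcF : F.card = d := hpc.1 F hF.1
  have hcard1 : (F \ E).card = 1 := by
    have h1 := Finset.card_sdiff_add_card_inter F E
    have h2 : (F ∩ E).card = (E ∩ F).card := by rw [Finset.inter_comm]
    omega
  have hFE : F \ E = {z} := by
    rw [Finset.eq_singleton_iff_unique_mem]
    refine ⟨Finset.mem_sdiff.mpr hzF, fun x hx => ?_⟩
    have := Finset.card_eq_one.mp hcard1
    obtain ⟨w, hw⟩ := this
    have h1 : x = w := by rwa [hw, Finset.mem_singleton] at hx
    have h2 : z = w := by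
      have : z ∈ F \ E := Finset.mem_sdiff.mpr hzF
      rwa [hw, Finset.mem_singleton] at this
    rw [h1, h2]
  refine ⟨F, hF.1, fun h => hzF.2 (h ▸ hzF.1), ?_⟩
  rw [mexp_le_iff]
  intro x hx
  rw [Finsupp.add_apply, mexp_apply]
  by_cases hxE : x ∈ E
  · rw [if_pos hxE]; omega
  · have : x ∈ F \ E := Finset.mem_sdiff.mpr ⟨hx, hxE⟩
    rw [hFE, Finset.mem_singleton] at this
    subst this
    rw [Finsupp.single_eq_same]
    omega

lemma inter_empty_of_far {H : SimpleHypergraph V'} {d : ℕ} (hpc : UniformPC H d)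
    {E F : Finset V'} (hE : E ∈ H.edges) (hF : F ∈ H.edges)
    (h : (d : ℕ∞) + 1 ≤ edgeDist H E F) : E ∩ F = ∅ := by
  by_contra hc
  have hne : (E ∩ F).Nonempty := Finset.nonempty_iff_ne_empty.mpr hc
  have hpcEF := hpc.2 E hE F hF hne
  rw [hpcEF] at h
  have : (d : ℕ) + 1 ≤ d - (E ∩ F).card := by exact_mod_cast h
  omega

lemma ne_of_far {H : SimpleHypergraph V'} {d : ℕ}
    {E F : Finset V'} (hE : E ∈ H.edges)
    (h : (d : ℕ∞) + 1 ≤ edgeDist H E F) : F ≠ E := by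
  intro hEF
  subst hEF
  rw [edgeDist_self_eq_zero hE] at h
  simp at h

end AuxLemmas

theorem intersection_ideal_eq (k : Type*) [Field k] {V : Type*} [DecidableEq V]
    (H : SimpleHypergraph V) (d : ℕ) (hpc : UniformPC H d)
    (E : Finset V) (hE : E ∈ H.edges) :
    Ideal.span {edgeMonomial k E} ⊓ edgeIdeal k (H.restrict (· ≠ E)) =
    Ideal.span {edgeMonomial k E} *
      (Ideal.span ((fun z => (MvPolynomial.X z : MvPolynomial V k)) '' ↑(nbrSet H E)) +
        edgeIdeal k (H.restrict fun F => ((d : ℕ∞) + 1) ≤ edgeDist H E F)) := by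
  set J : Ideal (MvPolynomial V k) := Ideal.span {edgeMonomial k E} with hJ
  set L : Ideal (MvPolynomial V k) := edgeIdeal k (H.restrict (· ≠ E)) with hL
  set P : Ideal (MvPolynomial V k) :=
    Ideal.span ((fun z => (MvPolynomial.X z : MvPolynomial V k)) '' ↑(nbrSet H E)) with hP
  set Q : Ideal (MvPolynomial V k) :=
    edgeIdeal k (H.restrict fun F => ((d : ℕ∞) + 1) ≤ edgeDist H E F) with hQ
  -- membership of restricted edges into L
  have hLmem : ∀ {F : Finset V}, F ∈ H.edges → F ≠ E →
      MvPolynomial.monomial (mexp F) (1 : k) ∈ L := by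
    intro F hF hne
    rw [← edgeMonomial_eq]
    exact edgeMonomial_mem k _ ((mem_restrict_iff H _ F).mpr ⟨hF, hne⟩)
  -- R = P + Q is contained in the colon ideal (L : x^E)
  have hcolon : P + Q ≤ Submodule.colon L (Ideal.span {edgeMonomial k E}) := by
    refine sup_le ?_ ?_
    · rw [hP, Ideal.span_le]
      rintro _ ⟨z, hz, rfl⟩
      rw [SetLike.mem_coe, Ideal.mem_colon_span_singleton]
      obtain ⟨F, hF, hFne, hle⟩ := nbr_divides hpc hE (Finset.mem_coe.mp hz)
      simp only [edgeMonomial_eq, X_eq_monomial, MvPolynomial.monomial_mul, one_mul]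
      exact monomial_mem_of_le (by rwa [add_comm] at hle) (hLmem hF hFne) 1
    · rw [hQ, edgeIdeal, Ideal.span_le]
      rintro _ ⟨G, hG, rfl⟩
      rw [SetLike.mem_coe, Ideal.mem_colon_span_singleton]
      rw [Finset.mem_coe, mem_restrict_iff] at hG
      have hGne : G ≠ E := ne_of_far hE hG.2
      simp only [edgeMonomial_eq, MvPolynomial.monomial_mul, one_mul]
      exact monomial_mem_of_le (le_add_self.trans_eq (add_comm _ _)) (hLmem hG.1 hGne) 1
  refine le_antisymm ?_ ?_
  · -- hard direction: J ⊓ L ≤ J * (P + Q)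
    intro p hp
    obtain ⟨hpJ, hpL⟩ := hp
    obtain ⟨q, hq⟩ := Ideal.mem_span_singleton'.mp hpJ
    have hdiv := edgeIdeal_le_divIdeal k (H.restrict (· ≠ E)) hpL
    rw [mem_divIdeal_iff] at hdiv
    have hqmem : q ∈ P + Q := by
      rw [← MvPolynomial.support_sum_monomial_coeff q]
      refine Ideal.sum_mem _ fun a ha => ?_
      have hsupp : a + mexp E ∈ p.support := by
        rw [MvPolynomial.mem_support_iff, ← hq, edgeMonomial_eq,
          MvPolynomial.coeff_mul_monomial, mul_one]
        exact MvPolynomial.mem_support_iff.mp ha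
      obtain ⟨_, ⟨F, hF, rfl⟩, hle⟩ := hdiv _ hsupp
      rw [Finset.mem_coe, mem_restrict_iff] at hF
      obtain ⟨hFH, hFne⟩ := hF
      by_cases hfar : (d : ℕ∞) + 1 ≤ edgeDist H E F
      · -- use Q
        have hdisj := inter_empty_of_far hpc hE hFH hfar
        have hle' : mexp F ≤ a := by
          rw [mexp_le_iff] at hle ⊢
          intro x hx
          have hxE : x ∉ E := by
            intro hxE
            have : x ∈ E ∩ F := Finset.mem_inter.mpr ⟨hxE, hx⟩
            rw [hdisj] at this
            exact absurd this (Finset.notMem_empty x)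
          have := hle x hx
          rwa [Finsupp.add_apply, mexp_apply, if_neg hxE, add_zero] at this
        refine Submodule.mem_sup_right ?_
        refine monomial_mem_of_le hle' ?_ _
        rw [← edgeMonomial_eq]
        exact edgeMonomial_mem k _ ((mem_restrict_iff H _ F).mpr ⟨hFH, hfar⟩)
      · -- use P
        obtain ⟨z, hzF, hzE, hzN⟩ := exists_nbr_of_close hpc hE hFH hFne hfar
        have hsingle : Finsupp.single z 1 ≤ a := by
          rw [Finsupp.single_le_iff]
          have := (mexp_le_iff F _).mp hle z hzF
          rwa [Finsupp.add_apply, mexp_apply, if_neg hzE, add_zero] at this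
        refine Submodule.mem_sup_left ?_
        refine monomial_mem_of_le hsingle ?_ _
        rw [← X_eq_monomial]
        exact Ideal.subset_span (Set.mem_image_of_mem _ (Finset.mem_coe.mpr hzN))
    have hxEJ : edgeMonomial k E ∈ J := Ideal.subset_span rfl
    have hpq : p = edgeMonomial k E * q := by rw [mul_comm, hq]
    rw [hpq]
    exact Ideal.mul_mem_mul hxEJ hqmem
  · -- easy direction: J * (P + Q) ≤ J ⊓ L
    refine le_inf Ideal.mul_le_left ?_
    rw [Ideal.mul_le]
    intro r hr s hs
    obtain ⟨c, rfl⟩ := Ideal.mem_span_singleton'.mp hr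
    have hsL : s * edgeMonomial k E ∈ L := Ideal.mem_colon_span_singleton.mp (hcolon hs)
    have heq : c * edgeMonomial k E * s = c * (s * edgeMonomial k E) := by ring
    rw [heq]
    exact Ideal.mul_mem_left _ _ hsL
end
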